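/- Let F be an algebraically closed field, let Y be an integral scheme of finite type over F, and let E/F be a field extension. Then the base extension X = Y ×_{Spec F} Spec E is an integral scheme. -/

import Mathlib

open AlgebraicGeometry CategoryTheory CategoryTheory.Limits TopologicalSpace

universe u

namespace ThcrDM

variable {X : Scheme.{u}}

/-- The `n`-th iterate (`n : ℤ`) of an automorphism of a scheme, on points. -/
noncomputable def iter (σ : X ≅ X) : ℤ → X → X
  | Int.ofNat n => (fun x => σ.hom.base x)^[n]
  | Int.negSucc n => (fun x => σ.inv.base x)^[n + 1]

/-- The σ-orbit `{σ^n(x) : n ∈ ℤ}` of a point `x`. -/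
noncomputable def orbit (σ : X ≅ X) (x : X) : Set X :=
  Set.range fun n : ℤ => iter σ n x

/-- A subset `Z` is σ-invariant if `σ(Z) = Z`. -/
def SigmaInv (σ : X ≅ X) (Z : Set X) : Prop :=
  σ.hom.base '' Z = Z

/-- A σ-invariant closed subset is σ-irreducible if it admits no decomposition into two
σ-invariant closed subsets both properly contained in it. -/
def SigmaIrred (σ : X ≅ X) (Z : Set X) : Prop :=
  IsClosed Z ∧ SigmaInv σ Z ∧
    ∀ Z₁ Z₂ : Set X, IsClosed Z₁ → IsClosed Z₂ → SigmaInv σ Z₁ → SigmaInv σ Z₂ →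
      Z = Z₁ ∪ Z₂ → ¬(Z₁ ⊂ Z ∧ Z₂ ⊂ Z)

/-- `W` is a maximal σ-irreducible closed subset of `Z`, i.e. a maximal element, under
inclusion, of the set of proper σ-irreducible closed subsets of `Z`. -/
def MaxSigmaIrredIn (σ : X ≅ X) (Z W : Set X) : Prop :=
  SigmaIrred σ W ∧ W ⊂ Z ∧ ∀ W' : Set X, SigmaIrred σ W' → W' ⊂ Z → W ⊆ W' → W' = W

/-- `(X, σ)` has good dense orbits if the set of points with dense σ-orbit is open. -/
def GoodDenseOrbits (σ : X ≅ X) : Prop :=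
  IsOpen { x : X | Dense (orbit σ x) }

/-- `(X, σ)` is ordinary if for every σ-irreducible closed subset `Z`, the set of points of `Z`
whose σ-orbit is dense in `Z` is open in `Z` (in the subspace topology). -/
def Ordinary (σ : X ≅ X) : Prop :=
  ∀ Z : Set X, SigmaIrred σ Z →
    ∃ U : Set X, IsOpen U ∧ { z | z ∈ Z ∧ Z ⊆ closure (orbit σ z) } = U ∩ Z

/-- `(X, σ)` is countable-avoiding if every σ-irreducible closed subset has either finitely
many or uncountably many maximal σ-irreducible closed subsets. -/
def CountableAvoiding (σ : X ≅ X) : Prop :=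
  ∀ Z : Set X, SigmaIrred σ Z →
    { W : Set X | MaxSigmaIrredIn σ Z W }.Finite ∨
      ¬ { W : Set X | MaxSigmaIrredIn σ Z W }.Countable

/-- A subset `Z` has codimension one if every irreducible component of `Z` (i.e. every maximal
irreducible subset of `Z`) has coheight 1 in the poset of irreducible closed subsets of `X`. -/
def CodimOne (Z : Set X) : Prop :=
  ∀ T : IrreducibleCloseds X,
    Maximal (fun s : Set X => s ⊆ Z ∧ IsIrreducible s) ↑T → Order.coheight T = 1

/-- Powers of an automorphism. -/
noncomputable def isoPow (σ : X ≅ X) : ℕ → (X ≅ X)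
  | 0 => Iso.refl X
  | n + 1 => isoPow σ n ≪≫ σ

/-- The automorphism of the function field induced by an automorphism of an irreducible
scheme. -/
noncomputable def functionFieldAut [IrreducibleSpace X] (σ : X ≅ X) :
    X.functionField ⟶ X.functionField :=
  eqToHom (congrArg X.presheaf.stalk (genericPoint_eq_of_isOpenImmersion σ.hom).symm) ≫
    σ.hom.stalkMap (genericPoint X)

/-- The canonical map from the base ring into the function field of an irreducible
scheme over it. -/
noncomputable def constMap [IrreducibleSpace X] {k : CommRingCat.{u}} (p : X ⟶ Spec k) :
    k ⟶ X.functionField :=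
  haveI : Nonempty (⊤ : X.Opens) := ⟨⟨Classical.arbitrary X, trivial⟩⟩
  (Scheme.ΓSpecIso k).inv ≫ p.appTop ≫ X.germToFunctionField ⊤


open TensorProduct


set_option maxHeartbeats 1000000 in
set_option synthInstance.maxHeartbeats 400000 in
theorem tensor_isDomain (F : Type u) [Field F] [IsAlgClosed F]
    (A : Type u) [CommRing A] [IsDomain A] [Algebra F A]
    (E : Type u) [Field E] [Algebra F E] :
    IsDomain (A ⊗[F] E) := by
  classical
  let b : Module.Basis (Module.Basis.ofVectorSpaceIndex F E) F E := Module.Basis.ofVectorSpace F E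
  let B : Module.Basis _ A (A ⊗[F] E) := b.baseChange A
  have hnt : Nontrivial (A ⊗[F] E) := by
    obtain ⟨i⟩ := b.index_nonempty
    exact nontrivial_of_ne (B i) 0 (B.ne_zero i)
  refine @NoZeroDivisors.to_isDomain _ _ hnt ?_
  constructor
  intro x y hxy
  by_contra hcon
  push_neg at hcon
  obtain ⟨hx, hy⟩ := hcon
  set cx := B.repr x with hcx
  set cy := B.repr y with hcy
  have hcxne : cx.support.Nonempty := by
    rw [Finsupp.support_nonempty_iff]
    simpa [hcx] using hx
  have hcyne : cy.support.Nonempty := by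
    rw [Finsupp.support_nonempty_iff]
    simpa [hcy] using hy
  set s : Finset A := cx.support.image cx ∪ cy.support.image cy with hs
  set A₀ : Subalgebra F A := Algebra.adjoin F (s : Set A) with hA₀
  have hmemx : ∀ i ∈ cx.support, cx i ∈ A₀ := fun i hi =>
    Algebra.subset_adjoin (by
      simp only [hs, Finset.coe_union, Set.mem_union, Finset.coe_image, Set.mem_image]
      exact Or.inl ⟨i, by simpa using hi, rfl⟩)
  have hmemy : ∀ i ∈ cy.support, cy i ∈ A₀ := fun i hi =>
    Algebra.subset_adjoin (by
      simp only [hs, Finset.coe_union, Set.mem_union, Finset.coe_image, Set.mem_image]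
      exact Or.inr ⟨i, by simpa using hi, rfl⟩)
  set x₀ : A₀ ⊗[F] E := ∑ i ∈ cx.support.attach, (⟨cx i.1, hmemx i.1 i.2⟩ : A₀) ⊗ₜ[F] b i.1
    with hx₀
  set y₀ : A₀ ⊗[F] E := ∑ i ∈ cy.support.attach, (⟨cy i.1, hmemy i.1 i.2⟩ : A₀) ⊗ₜ[F] b i.1
    with hy₀
  set j : A₀ ⊗[F] E →ₐ[F] A ⊗[F] E := Algebra.TensorProduct.map A₀.val (AlgHom.id F E) with hj
  have hrepr : ∀ (c : _ →₀ A) (z : A ⊗[F] E), B.repr z = c →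
      z = ∑ i ∈ c.support, (c i) ⊗ₜ[F] b i := by
    intro c z hc
    have := B.linearCombination_repr z
    rw [hc, Finsupp.linearCombination_apply, Finsupp.sum] at this
    rw [← this]
    refine Finset.sum_congr rfl fun i _ => ?_
    rw [show B i = (1 : A) ⊗ₜ[F] b i from b.baseChange_apply A i, TensorProduct.smul_tmul',
      smul_eq_mul, mul_one]
  have hjx : j x₀ = x := by
    rw [hx₀, map_sum, hrepr cx x hcx.symm, ← Finset.sum_attach cx.support
      (fun i => (cx i) ⊗ₜ[F] b i)]
    rfl
  have hjy : j y₀ = y := by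
    rw [hy₀, map_sum, hrepr cy y hcy.symm, ← Finset.sum_attach cy.support
      (fun i => (cy i) ⊗ₜ[F] b i)]
    rfl
  have hinj : Function.Injective j := by
    have h2 : Function.Injective
        (LinearMap.rTensor E (A₀.val.toLinearMap : A₀ →ₗ[F] A)) :=
      Module.Flat.rTensor_preserves_injective_linearMap _ Subtype.val_injective
    have heq : j.toLinearMap = LinearMap.rTensor E (A₀.val.toLinearMap : A₀ →ₗ[F] A) :=
      TensorProduct.ext' fun u v => rfl
    show Function.Injective ⇑j.toLinearMap
    rw [heq]
    exact h2
  have hxy0 : x₀ * y₀ = 0 := by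
    apply hinj
    rw [map_mul, hjx, hjy, hxy, map_zero]
  obtain ⟨i₀, hi₀⟩ := hcxne
  obtain ⟨k₀, hk₀⟩ := hcyne
  set p : A₀ := ⟨cx i₀, hmemx i₀ hi₀⟩ * ⟨cy k₀, hmemy k₀ hk₀⟩ with hp
  -- A₀ is a finite type F-algebra, hence Jacobson
  haveI hft : Algebra.FiniteType F A₀ := by
    rw [hA₀, ← Subalgebra.fg_iff_finiteType]
    exact Subalgebra.fg_adjoin_finset s
  haveI : IsJacobsonRing A₀ := isJacobsonRing_of_finiteType (A := F)
  have key : ∀ m : Ideal A₀, m.IsMaximal → p ∈ m := by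
    intro m hm
    haveI := hm
    letI : Field (A₀ ⧸ m) := Ideal.Quotient.field m
    haveI : Algebra.FiniteType F (A₀ ⧸ m) :=
      Algebra.FiniteType.of_surjective (Ideal.Quotient.mkₐ F m)
        (Ideal.Quotient.mkₐ_surjective F m)
    haveI : Module.Finite F (A₀ ⧸ m) := finite_of_finite_type_of_isJacobsonRing F (A₀ ⧸ m)
    haveI : Algebra.IsIntegral F (A₀ ⧸ m) := Algebra.IsIntegral.of_finite F _
    have surj : Function.Surjective (algebraMap F (A₀ ⧸ m)) :=
      IsAlgClosed.algebraMap_bijective_of_isIntegral.2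
    set e : F ≃+* (A₀ ⧸ m) :=
      RingEquiv.ofBijective (algebraMap F (A₀ ⧸ m)) ⟨(algebraMap F (A₀ ⧸ m)).injective, surj⟩
      with he
    set f0 : A₀ →+* F := e.symm.toRingHom.comp (Ideal.Quotient.mk m) with hf0
    have hf0alg : ∀ c : F, f0 (algebraMap F A₀ c) = c := by
      intro c
      have h1 : (Ideal.Quotient.mk m) (algebraMap F A₀ c) = algebraMap F (A₀ ⧸ m) c := by
        rw [← Ideal.Quotient.algebraMap_eq]
        exact (IsScalarTower.algebraMap_apply F A₀ (A₀ ⧸ m) c).symm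
      rw [hf0, RingHom.comp_apply, h1]
      exact e.symm_apply_apply c
    set φ : A₀ →ₐ[F] E :=
      { toRingHom := (algebraMap F E).comp f0
        commutes' := fun c => by simp [hf0alg c] } with hφ
    set ψ : A₀ ⊗[F] E →ₐ[F] E :=
      Algebra.TensorProduct.lift φ (AlgHom.id F E) (fun _ _ => Commute.all _ _) with hψ
    have hψ0 : ψ x₀ * ψ y₀ = 0 := by rw [← map_mul, hxy0, map_zero]
    have main : ∀ (c : _ →₀ A) (hc : ∀ i ∈ c.support, c i ∈ A₀),
        ψ (∑ i ∈ c.support.attach, (⟨c i.1, hc i.1 i.2⟩ : A₀) ⊗ₜ[F] b i.1) = 0 →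
        ∀ i (hi : i ∈ c.support), f0 ⟨c i, hc i hi⟩ = 0 := by
      intro c hc h0
      set g : Module.Basis.ofVectorSpaceIndex F E → F := fun i =>
        if h : i ∈ c.support then f0 ⟨c i, hc i h⟩ else 0 with hg
      have hsum : ∑ i ∈ c.support, g i • b i = 0 := by
        rw [← h0, map_sum]
        rw [← Finset.sum_attach c.support (fun i => g i • b i)]
        refine (Finset.sum_congr rfl fun i _ => ?_).symm
        rw [hψ, Algebra.TensorProduct.lift_tmul, hg]
        simp only [i.2, dif_pos]
        rw [AlgHom.id_apply, hφ]
        show (algebraMap F E) (f0 ⟨c i.1, hc i.1 i.2⟩) * b i.1 = _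
        rw [Algebra.smul_def]
      intro i hi
      have := linearIndependent_iff'.mp b.linearIndependent c.support g hsum i hi
      rw [hg] at this
      simpa [hi] using this
    rcases mul_eq_zero.mp hψ0 with h0 | h0
    · have := main cx hmemx h0 i₀ hi₀
      have hmem : (⟨cx i₀, hmemx i₀ hi₀⟩ : A₀) ∈ m := by
        rw [← Ideal.Quotient.eq_zero_iff_mem]
        have := congrArg e this
        rw [map_zero] at this
        rw [← this, hf0]
        exact (e.apply_symm_apply _).symm
      exact Ideal.mul_mem_right _ m hmem
    · have := main cy hmemy h0 k₀ hk₀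
      have hmem : (⟨cy k₀, hmemy k₀ hk₀⟩ : A₀) ∈ m := by
        rw [← Ideal.Quotient.eq_zero_iff_mem]
        have := congrArg e this
        rw [map_zero] at this
        rw [← this, hf0]
        exact (e.apply_symm_apply _).symm
      exact Ideal.mul_mem_left _ _ hmem
  have hpjac : p ∈ Ideal.jacobson (⊥ : Ideal A₀) := by
    rw [Ideal.jacobson]
    exact Ideal.mem_sInf.mpr fun {J} hJ => key J hJ.2
  rw [IsJacobsonRing.out' _ Ideal.isRadical_bot_of_noZeroDivisors] at hpjac
  have : (cx i₀) * (cy k₀) = 0 := by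
    have := congrArg (Subtype.val) (Ideal.mem_bot.mp hpjac)
    simpa [hp] using this
  rcases mul_eq_zero.mp this with h | h
  · exact (Finsupp.mem_support_iff.mp hi₀) h
  · exact (Finsupp.mem_support_iff.mp hk₀) h

open AlgebraicGeometry CategoryTheory CategoryTheory.Limits TopologicalSpace TensorProduct


/-- A space covered by open irreducible subsets with pairwise nonempty intersections is
irreducible. -/
lemma irreducibleSpace_of_cover {T : Type*} [TopologicalSpace T] [Nonempty T]
    {ι : Sort*} (W : ι → Set T)
    (hop : ∀ i, IsOpen (W i)) (hirr : ∀ i, IsIrreducible (W i))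
    (hint : ∀ i j, (W i ∩ W j).Nonempty)
    (hcov : ∀ t : T, ∃ i, t ∈ W i) : IrreducibleSpace T := by
  refine { isPreirreducible_univ := ?_, toNonempty := inferInstance }
  rintro u v hu hv ⟨a, -, hau⟩ ⟨c, -, hcv⟩
  obtain ⟨i, hai⟩ := hcov a
  obtain ⟨j, hcj⟩ := hcov c
  obtain ⟨d, hdi, hdu, hdj⟩ := (hirr i).2 u (W j) hu (hop j) ⟨a, hai, hau⟩ (hint i j)
  obtain ⟨e, hej, heu, hev⟩ := (hirr j).2 u v hu hv ⟨d, hdj, hdu⟩ ⟨c, hcj, hcv⟩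
  exact ⟨e, trivial, heu, hev⟩

lemma isIrreducible_of_irreducibleSpace {T : Type*} [TopologicalSpace T] (s : Set T)
    [IrreducibleSpace s] : IsIrreducible s := by
  have h := (IrreducibleSpace.isIrreducible_univ s).image Subtype.val
    continuous_subtype_val.continuousOn
  simpa [Set.image_univ, Subtype.range_coe] using h

/-- The preimage of a nonempty affine open under the base change projection is an
integral scheme. -/
lemma preimage_isIntegral
    (F : Type u) [Field F] [IsAlgClosed F]
    (E : Type u) [Field E] [Algebra F E]
    {Y X : Scheme.{u}} (q : Y ⟶ Spec (CommRingCat.of F)) [IsIntegral Y]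
    (π : X ⟶ Y) (s : X ⟶ Spec (CommRingCat.of E))
    (hpb : IsPullback π s q (Spec.map (CommRingCat.ofHom (algebraMap F E))))
    (U : Y.Opens) (hU : IsAffineOpen U) (hne : Nonempty U) :
    IsIntegral (π ⁻¹ᵁ U).toScheme := by
  haveI : IsAffine U.toScheme := hU
  haveI : Nonempty U.toScheme := hne
  haveI : IsIntegral U.toScheme := isIntegral_of_isOpenImmersion U.ι
  have h2 : IsPullback (π ∣_ U) ((π ⁻¹ᵁ U).ι ≫ s) (U.ι ≫ q)
      (Spec.map (CommRingCat.ofHom (algebraMap F E))) :=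
    (isPullback_morphismRestrict π U).paste_vert hpb
  set e : U.toScheme ≅ Spec Γ(U.toScheme, ⊤) := U.toScheme.isoSpec with he
  have h3 : IsPullback (π ∣_ U ≫ e.hom) ((π ⁻¹ᵁ U).ι ≫ s) (e.inv ≫ U.ι ≫ q)
      (Spec.map (CommRingCat.ofHom (algebraMap F E))) :=
    h2.of_iso (Iso.refl _) e (Iso.refl _) (Iso.refl _) (by simp) (by simp)
      (by simp) (by simp)
  set ρ : CommRingCat.of F ⟶ Γ(U.toScheme, ⊤) := Spec.preimage (e.inv ≫ U.ι ≫ q) with hρ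
  letI : Algebra F Γ(U.toScheme, ⊤) := ρ.hom.toAlgebra
  have hu : (e.inv ≫ U.ι ≫ q : Spec Γ(U.toScheme, ⊤) ⟶ Spec (CommRingCat.of F)) =
      Spec.map (CommRingCat.ofHom (algebraMap F Γ(U.toScheme, ⊤))) := by
    rw [show CommRingCat.ofHom (algebraMap F Γ(U.toScheme, ⊤)) = ρ from rfl, Spec.map_preimage]
  rw [hu] at h3
  have hB := isPullback_SpecMap_of_isPushout _ _ _ _
    (CommRingCat.isPushout_tensorProduct F Γ(U.toScheme, ⊤) E)
  have iso : (π ⁻¹ᵁ U).toScheme ≅ Spec (CommRingCat.of (Γ(U.toScheme, ⊤) ⊗[F] E)) :=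
    h3.isoIsPullback _ _ hB
  haveI : IsDomain (Γ(U.toScheme, ⊤) ⊗[F] E) := tensor_isDomain F Γ(U.toScheme, ⊤) E
  haveI : IsDomain (CommRingCat.of (Γ(U.toScheme, ⊤) ⊗[F] E)) :=
    tensor_isDomain F Γ(U.toScheme, ⊤) E
  haveI : Nonempty (π ⁻¹ᵁ U).toScheme := by
    have : Nonempty (Spec (CommRingCat.of (Γ(U.toScheme, ⊤) ⊗[F] E))) :=
      ⟨(⟨⊥, @Ideal.bot_prime _ _ (tensor_isDomain F Γ(U.toScheme, ⊤) E).toNontrivial _⟩ : PrimeSpectrum (Γ(U.toScheme, ⊤) ⊗[F] E))⟩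
    obtain ⟨pt⟩ := this
    exact ⟨iso.inv.base pt⟩
  exact isIntegral_of_isOpenImmersion iso.hom

theorem statement3' (F : Type u) [Field F] [IsAlgClosed F]
    (E : Type u) [Field E] [Algebra F E]
    (Y : Scheme.{u}) (q : Y ⟶ Spec (CommRingCat.of F))
    [IsIntegral Y]
    (X : Scheme.{u}) (π : X ⟶ Y) (s : X ⟶ Spec (CommRingCat.of E))
    (hpb : IsPullback π s q (Spec.map (CommRingCat.ofHom (algebraMap F E)))) :
    IsIntegral X := by
  -- the projection is surjective
  have hg : Surjective (Spec.map (CommRingCat.ofHom (algebraMap F E))) := by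
    constructor
    intro ptF
    have hne : Nonempty (Spec (CommRingCat.of E)) :=
      inferInstanceAs (Nonempty (PrimeSpectrum E))
    obtain ⟨pt⟩ := hne
    have : Subsingleton (Spec (CommRingCat.of F)) :=
      inferInstanceAs (Subsingleton (PrimeSpectrum F))
    exact ⟨pt, Subsingleton.elim _ _⟩
  haveI hπ : Surjective π := MorphismProperty.of_isPullback hpb.flip hg
  haveI hNY : Nonempty Y := inferInstance
  haveI hNX : Nonempty X := by
    obtain ⟨x, -⟩ := hπ.surj (Classical.arbitrary Y)
    exact ⟨x⟩
  -- affine neighbourhoods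
  have haff : ∀ y : Y, ∃ U : Y.Opens, IsAffineOpen U ∧ y ∈ U := by
    intro y
    obtain ⟨U, hU, hyU, -⟩ := TopologicalSpace.Opens.isBasis_iff_nbhd.mp
      (Scheme.isBasis_affineOpens Y) (show y ∈ (⊤ : Y.Opens) from trivial)
    exact ⟨U, hU, hyU⟩
  have hpiece : ∀ (U : Y.Opens), IsAffineOpen U → Nonempty U →
      IsIntegral (π ⁻¹ᵁ U).toScheme := fun U hU hne =>
    preimage_isIntegral F E q π s hpb U hU hne
  -- reduced
  haveI : ∀ x : X, _root_.IsReduced (X.presheaf.stalk x) := by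
    intro x
    obtain ⟨U, hU, hmem⟩ := haff (π.base x)
    haveI := hpiece U hU ⟨⟨_, hmem⟩⟩
    have hx : x ∈ π ⁻¹ᵁ U := hmem
    haveI : _root_.IsReduced ((π ⁻¹ᵁ U).toScheme.presheaf.stalk ⟨x, hx⟩) :=
      isReduced_stalk_of_isReduced _ _
    exact isReduced_of_injective ((π ⁻¹ᵁ U).stalkIso ⟨x, hx⟩).inv.hom
      ((ConcreteCategory.bijective_of_isIso ((π ⁻¹ᵁ U).stalkIso ⟨x, hx⟩).inv).injective)
  haveI hXred : IsReduced X := isReduced_of_isReduced_stalk X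
  -- irreducible
  haveI : IrreducibleSpace X := by
    set W : X → Set X := fun x => ((π ⁻¹ᵁ (haff (π.base x)).choose : Opens X) : Set X) with hW
    have hprops : ∀ x : X, IsAffineOpen (haff (π.base x)).choose ∧
        π.base x ∈ (haff (π.base x)).choose := fun x =>
      ⟨(haff (π.base x)).choose_spec.1, (haff (π.base x)).choose_spec.2⟩
    have hint : ∀ x : X, IsIntegral (π ⁻¹ᵁ (haff (π.base x)).choose).toScheme := fun x =>
      hpiece _ (hprops x).1 ⟨⟨_, (hprops x).2⟩⟩
    refine irreducibleSpace_of_cover W (fun x => (π ⁻¹ᵁ _).isOpen) ?_ ?_ ?_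
    · intro x
      haveI := hint x
      haveI : IrreducibleSpace ((π ⁻¹ᵁ (haff (π.base x)).choose : Opens X) : Set X) :=
        irreducibleSpace_of_isIntegral (π ⁻¹ᵁ (haff (π.base x)).choose).toScheme
      exact isIrreducible_of_irreducibleSpace _
    · intro x x'
      -- the two affine opens intersect in Y
      obtain ⟨y, hy1, hy2⟩ := nonempty_preirreducible_inter
        (haff (π.base x)).choose.isOpen (haff (π.base x')).choose.isOpen
        ⟨_, (hprops x).2⟩ ⟨_, (hprops x').2⟩
      obtain ⟨z, hz⟩ := hπ.surj y
      exact ⟨z, show π.base z ∈ _ from hz ▸ hy1, show π.base z ∈ _ from hz ▸ hy2⟩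
    · intro x
      exact ⟨x, (hprops x).2⟩
  exact isIntegral_of_irreducibleSpace_of_isReduced X


/-- Lemma 5.2 of the paper. The base extension `X = Y ×_{Spec F} Spec E` of
an integral scheme `Y` of finite type over an algebraically closed field `F` along a field
extension `E/F` is again integral. -/
theorem statement3 (F : Type u) [Field F] [IsAlgClosed F]
    (E : Type u) [Field E] [Algebra F E]
    (Y : Scheme.{u}) (q : Y ⟶ Spec (CommRingCat.of F))
    [IsIntegral Y] [LocallyOfFiniteType q] [QuasiCompact q]
    (X : Scheme.{u}) (π : X ⟶ Y) (s : X ⟶ Spec (CommRingCat.of E))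
    (hpb : IsPullback π s q (Spec.map (CommRingCat.ofHom (algebraMap F E)))) :
    IsIntegral X :=
  statement3' F E Y q X π s hpb

end ThcrDM
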